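/- For every λ with |λ| ≤ 1 and every η ≥ 0, the cotangent Lie algebras T*r_{3,λ} and T*r'_{3,η} do not carry any symplectic structure. -/

import Mathlib

open LieAlgebra

attribute [local instance 100] LieRing.ofAssociativeRing

noncomputable section

section SD

variable {h V : Type*} [LieRing h] [LieAlgebra ℝ h] [AddCommGroup V] [Module ℝ V]

/-- The underlying type of the semidirect product `h ⋉_π V`. -/
def Sd (_π : h →ₗ⁅ℝ⁆ Module.End ℝ V) : Type _ := h × V

namespace Sd

variable (π : h →ₗ⁅ℝ⁆ Module.End ℝ V)

instance : AddCommGroup (Sd π) := inferInstanceAs (AddCommGroup (h × V))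
instance : Module ℝ (Sd π) := inferInstanceAs (Module ℝ (h × V))

variable {π}

/-- An element of the semidirect product. -/
def mk (x : h) (v : V) : Sd π := (x, v)

def pr1 (p : Sd π) : h := Prod.fst p
def pr2 (p : Sd π) : V := Prod.snd p

@[simp] lemma pr1_mk (x : h) (v : V) : pr1 (mk (π := π) x v) = x := rfl
@[simp] lemma pr2_mk (x : h) (v : V) : pr2 (mk (π := π) x v) = v := rfl
@[simp] lemma mk_add_mk (x y : h) (u v : V) :
    (mk (π := π) x u) + (mk y v) = mk (x + y) (u + v) := rfl
@[simp] lemma smul_mk (t : ℝ) (x : h) (v : V) :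
    t • (mk (π := π) x v) = mk (t • x) (t • v) := rfl
@[simp] lemma neg_mk (x : h) (v : V) : -(mk (π := π) x v) = mk (-x) (-v) := rfl
lemma ext_iff {p q : Sd π} : p = q ↔ pr1 p = pr1 q ∧ pr2 p = pr2 q := Prod.ext_iff
@[simp] lemma mk_inj {x y : h} {u v : V} :
    (mk (π := π) x u) = mk y v ↔ x = y ∧ u = v := Prod.ext_iff
lemma mk_surj (p : Sd π) : ∃ x v, p = mk x v := ⟨pr1 p, pr2 p, rfl⟩

variable (π)

instance : LieRing (Sd π) where
  bracket p q := mk ⁅pr1 p, pr1 q⁆ (π (pr1 p) (pr2 q) - π (pr1 q) (pr2 p))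
  add_lie p q r := by
    obtain ⟨x, u, rfl⟩ := mk_surj p; obtain ⟨y, v, rfl⟩ := mk_surj q
    obtain ⟨z, w, rfl⟩ := mk_surj r
    show mk _ _ = mk _ _ + mk _ _
    simp [add_lie, map_add]
    abel
  lie_add p q r := by
    obtain ⟨x, u, rfl⟩ := mk_surj p; obtain ⟨y, v, rfl⟩ := mk_surj q
    obtain ⟨z, w, rfl⟩ := mk_surj r
    show mk _ _ = mk _ _ + mk _ _
    simp [lie_add, map_add]
    abel
  lie_self p := by
    obtain ⟨x, u, rfl⟩ := mk_surj p
    show mk _ _ = (0 : h × V)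
    simp
    rfl
  leibniz_lie p q r := by
    obtain ⟨x, u, rfl⟩ := mk_surj p; obtain ⟨y, v, rfl⟩ := mk_surj q
    obtain ⟨z, w, rfl⟩ := mk_surj r
    show mk _ _ = mk _ _ + mk _ _
    have hxy : π ⁅x, y⁆ = π x * π y - π y * π x := by
      rw [LieHom.map_lie]; rfl
    have hyz : π ⁅y, z⁆ = π y * π z - π z * π y := by
      rw [LieHom.map_lie]; rfl
    have hxz : π ⁅x, z⁆ = π x * π z - π z * π x := by
      rw [LieHom.map_lie]; rfl
    simp [hxy, hyz, hxz, LinearMap.sub_apply, Module.End.mul_apply, map_sub]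
    abel

instance : LieAlgebra ℝ (Sd π) where
  lie_smul t p q := by
    obtain ⟨x, u, rfl⟩ := mk_surj p; obtain ⟨y, v, rfl⟩ := mk_surj q
    show mk _ _ = t • mk _ _
    simp [smul_sub]

@[simp] lemma lie_mk (x y : h) (u v : V) :
    ⁅(Sd.mk (π := π) x u), (Sd.mk (π := π) y v)⁆ = mk ⁅x, y⁆ (π x v - π y u) := rfl

variable {π}

/-- The copy of `h` inside `h ⋉_π V`. -/
def hPart (π : h →ₗ⁅ℝ⁆ Module.End ℝ V) : Submodule ℝ (Sd π) where
  carrier := {p | pr2 p = 0}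
  add_mem' := by
    rintro p q hp hq
    obtain ⟨x, u, rfl⟩ := mk_surj p; obtain ⟨y, v, rfl⟩ := mk_surj q
    simp_all [Set.mem_setOf_eq]
  zero_mem' := rfl
  smul_mem' := by
    rintro t p hp
    obtain ⟨x, u, rfl⟩ := mk_surj p
    simp_all [Set.mem_setOf_eq]

/-- The copy of `V` inside `h ⋉_π V`. -/
def vPart (π : h →ₗ⁅ℝ⁆ Module.End ℝ V) : Submodule ℝ (Sd π) where
  carrier := {p | pr1 p = 0}
  add_mem' := by
    rintro p q hp hq
    obtain ⟨x, u, rfl⟩ := mk_surj p; obtain ⟨y, v, rfl⟩ := mk_surj q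
    simp_all [Set.mem_setOf_eq]
  zero_mem' := rfl
  smul_mem' := by
    rintro t p hp
    obtain ⟨x, u, rfl⟩ := mk_surj p
    simp_all [Set.mem_setOf_eq]

end Sd

end SD

section Cpx

variable {g : Type*} [LieRing g] [LieAlgebra ℝ g]

/-- A complex structure on a real Lie algebra: `J² = -I` and the Nijenhuis tensor of `J`
vanishes. -/
def IsCpxStruct (J : g →ₗ[ℝ] g) : Prop :=
  (∀ x, J (J x) = -x) ∧
  ∀ x y : g, ⁅J x, J y⁆ - ⁅x, y⁆ - J ⁅J x, y⁆ - J ⁅x, J y⁆ = 0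

/-- An abelian complex structure. -/
def IsAbelianCpx (J : g →ₗ[ℝ] g) : Prop := ∀ x y : g, ⁅J x, J y⁆ = ⁅x, y⁆

/-- A bi-invariant complex structure. -/
def IsBiinvariant (J : g →ₗ[ℝ] g) : Prop := ∀ x y : g, J ⁅x, y⁆ = ⁅x, J y⁆

/-- A totally real (almost) complex structure on a semidirect product: `J h = V`. -/
def IsTotallyReal {h V : Type*} [LieRing h] [LieAlgebra ℝ h] [AddCommGroup V] [Module ℝ V]
    (π : h →ₗ⁅ℝ⁆ Module.End ℝ V) (J : Sd π →ₗ[ℝ] Sd π) : Prop :=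
  (Sd.hPart π).map J = Sd.vPart π

end Cpx


section DualRep

variable {h V : Type*} [LieRing h] [LieAlgebra ℝ h] [AddCommGroup V] [Module ℝ V]

/-- The dual representation `π*` of a representation `π`, `(π*(x)a)(u) = -a(π(x)u)`. -/
def dualRep (π : h →ₗ⁅ℝ⁆ Module.End ℝ V) : h →ₗ⁅ℝ⁆ Module.End ℝ (Module.Dual ℝ V) where
  toFun x := -(π x).dualMap
  map_add' x y := by ext φ v; simp [map_add]; abel
  map_smul' t x := by ext φ v; simp
  map_lie' {x y} := by
    ext φ v
    have : π ⁅x, y⁆ = π x * π y - π y * π x := by rw [LieHom.map_lie]; rfl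
    simp [Ring.lie_def, Module.End.mul_apply, this, LinearMap.sub_apply]

@[simp] lemma dualRep_apply (π : h →ₗ⁅ℝ⁆ Module.End ℝ V) (x : h) (φ : Module.Dual ℝ V)
    (v : V) : dualRep π x φ v = -φ (π x v) := rfl

end DualRep

section TanCot

variable (h : Type*) [LieRing h] [LieAlgebra ℝ h]

/-- The coadjoint representation of `h` on `h*`. -/
abbrev coadRep : h →ₗ⁅ℝ⁆ Module.End ℝ (Module.Dual ℝ h) := dualRep (LieAlgebra.ad ℝ h)

/-- The tangent Lie algebra `T h = h ⋉_ad h`. -/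
abbrev TangentAlg := Sd (LieAlgebra.ad ℝ h)

/-- The cotangent Lie algebra `T*h = h ⋉_ad* h*`. -/
abbrev CotangentAlg := Sd (coadRep h)

/-- The canonical neutral metric on the cotangent Lie algebra `T*h`:
`⟨(x,φ),(y,ψ)⟩ = ψ(x) + φ(y)`. -/
def canMetric (p q : CotangentAlg h) : ℝ := Sd.pr2 p (Sd.pr1 q) + Sd.pr2 q (Sd.pr1 p)

end TanCot

section MorePreds

variable {g : Type*} [LieRing g] [LieAlgebra ℝ g]

/-- A derivation of a Lie algebra. -/
def IsDer (d : g →ₗ[ℝ] g) : Prop := ∀ x y : g, d ⁅x, y⁆ = ⁅d x, y⁆ + ⁅x, d y⁆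

/-- The ascending series `a_l(J)` associated to an almost complex structure `J`. -/
def aSer (J : g →ₗ[ℝ] g) : ℕ → Set g
  | 0 => {0}
  | l + 1 => {x | (∀ y : g, ⁅x, y⁆ ∈ aSer J l) ∧ ∀ y : g, ⁅J x, y⁆ ∈ aSer J l}

/-- A nilpotent (almost) complex structure: `a_t(J) = g` for some `t`. -/
def IsNilpotentCpx (J : g →ₗ[ℝ] g) : Prop := ∃ t, aSer J t = Set.univ

/-- An `r`-step nilpotent (almost) complex structure. -/
def IsNilpotentStepCpx (J : g →ₗ[ℝ] g) (r : ℕ) : Prop :=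
  aSer J r = Set.univ ∧ ∀ s < r, aSer J s ≠ Set.univ

/-- A symplectic structure on a Lie algebra, as a bilinear, alternating, nondegenerate,
closed 2-form. -/
def IsSymplForm (ω : g → g → ℝ) : Prop :=
  (∀ x : g, IsLinearMap ℝ (ω x)) ∧ (∀ y : g, IsLinearMap ℝ (fun x => ω x y)) ∧
  (∀ x : g, ω x x = 0) ∧ (∀ x : g, (∀ y : g, ω x y = 0) → x = 0) ∧
  ∀ x y z : g, ω ⁅x, y⁆ z + ω ⁅y, z⁆ x + ω ⁅z, x⁆ y = 0

/-- A Kähler structure: a compatible pair of a complex structure and a symplectic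
structure. -/
def IsKahlerPair (J : g →ₗ[ℝ] g) (ω : g → g → ℝ) : Prop :=
  IsCpxStruct J ∧ IsSymplForm ω ∧ ∀ x y : g, ω (J x) (J y) = ω x y

end MorePreds

section LagSympl

variable {h V : Type*} [LieRing h] [LieAlgebra ℝ h] [AddCommGroup V] [Module ℝ V]

/-- A lagrangian symplectic structure on a semidirect product `h ⋉_π V`: both `h` and `V`
are totally isotropic. -/
def IsLagrangianSympl (π : h →ₗ⁅ℝ⁆ Module.End ℝ V) (ω : Sd π → Sd π → ℝ) : Prop :=
  IsSymplForm ω ∧ (∀ x y : h, ω (Sd.mk x 0) (Sd.mk y 0) = 0) ∧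
    ∀ u v : V, ω (Sd.mk 0 u) (Sd.mk 0 v) = 0

end LagSympl

section Solv3

/-- A `2 × 2` real matrix as an endomorphism of `ℝ²`. -/
def endOf (a b c d : ℝ) : Module.End ℝ (Fin 2 → ℝ) where
  toFun v := ![a * v 0 + b * v 1, c * v 0 + d * v 1]
  map_add' u v := by
    funext i; fin_cases i <;> simp [Matrix.cons_val_zero, Matrix.cons_val_one] <;> ring
  map_smul' t v := by
    funext i; fin_cases i <;> simp [Matrix.cons_val_zero, Matrix.cons_val_one] <;> ring

/-- The representation of the abelian Lie algebra `ℝ` on `ℝ²` sending `t` to `t • A`. -/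
def rep2 (A : Module.End ℝ (Fin 2 → ℝ)) : ℝ →ₗ⁅ℝ⁆ Module.End ℝ (Fin 2 → ℝ) where
  toFun t := t • A
  map_add' s t := by simp [add_smul]
  map_smul' s t := by simp [mul_smul]
  map_lie' {s t} := by
    ext v
    simp [Ring.lie_def, Module.End.mul_apply, smul_smul, mul_comm]

/-- The solvable Lie algebra `ℝ ⋉_A ℝ²` determined by a `2 × 2` matrix `A`. -/
abbrev Solv3 (A : Module.End ℝ (Fin 2 → ℝ)) := Sd (rep2 A)

/-- The 3-dimensional Heisenberg Lie algebra `h1`: `[e1,e2] = e3`. -/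
abbrev H1 := Solv3 (endOf 0 0 1 0)

/-- The Lie algebra `r3`: `[e1,e2] = e2`, `[e1,e3] = e2 + e3`. -/
abbrev R3 := Solv3 (endOf 1 1 0 1)

/-- The Lie algebra `r_{3,λ}`: `[e1,e2] = e2`, `[e1,e3] = λ e3`. -/
abbrev R3l (lam : ℝ) := Solv3 (endOf 1 0 0 lam)

/-- The Lie algebra `r'_{3,η}`: `[e1,e2] = ηe2 - e3`, `[e1,e3] = e2 + ηe3`. -/
abbrev R3e' (eta : ℝ) := Solv3 (endOf eta 1 (-1) eta)

namespace Solv3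

variable (A : Module.End ℝ (Fin 2 → ℝ))

/-- The basis vector `e1` of `ℝ ⋉_A ℝ²`. -/
def E1 : Solv3 A := Sd.mk 1 0
/-- The basis vector `e2` of `ℝ ⋉_A ℝ²`. -/
def E2 : Solv3 A := Sd.mk 0 ![1, 0]
/-- The basis vector `e3` of `ℝ ⋉_A ℝ²`. -/
def E3 : Solv3 A := Sd.mk 0 ![0, 1]

/-- The dual basis vector `e1* ∈ (ℝ ⋉_A ℝ²)*`. -/
def D1 : Module.Dual ℝ (Solv3 A) := LinearMap.fst ℝ ℝ (Fin 2 → ℝ)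
/-- The dual basis vector `e2* ∈ (ℝ ⋉_A ℝ²)*`. -/
def D2 : Module.Dual ℝ (Solv3 A) :=
  (LinearMap.proj 0).comp (LinearMap.snd ℝ ℝ (Fin 2 → ℝ))
/-- The dual basis vector `e3* ∈ (ℝ ⋉_A ℝ²)*`. -/
def D3 : Module.Dual ℝ (Solv3 A) :=
  (LinearMap.proj 1).comp (LinearMap.snd ℝ ℝ (Fin 2 → ℝ))

end Solv3

end Solv3

section Simple3



/-- Structure-constant bracket of a concrete copy of `sl(2,ℝ)`. -/
def sl2Br (x y : Fin 3 → ℝ) : Fin 3 → ℝ :=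
  ![2 * (x 2 * y 0 - y 2 * x 0), -2 * (x 2 * y 1 - y 2 * x 1), x 0 * y 1 - y 0 * x 1]

/-- Structure-constant bracket of a concrete copy of `so(3)`. -/
def so3Br (x y : Fin 3 → ℝ) : Fin 3 → ℝ :=
  ![-(x 2 * y 1 - y 2 * x 1), x 2 * y 0 - y 2 * x 0, x 0 * y 1 - y 0 * x 1]

/-- Structure-constant bracket of the complex Heisenberg algebra. -/
def ch1Br (x y : Fin 3 → ℂ) : Fin 3 → ℂ := ![0, 0, x 0 * y 1 - y 0 * x 1]

section BrLemmas

lemma sl2Br_add_left (x y z : Fin 3 → ℝ) :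
    sl2Br (x + y) z = sl2Br x z + sl2Br y z := by
  funext i; fin_cases i <;> simp [sl2Br] <;> ring
lemma sl2Br_add_right (x y z : Fin 3 → ℝ) :
    sl2Br x (y + z) = sl2Br x y + sl2Br x z := by
  funext i; fin_cases i <;> simp [sl2Br] <;> ring
lemma sl2Br_self (x : Fin 3 → ℝ) : sl2Br x x = 0 := by
  funext i; fin_cases i <;> simp [sl2Br] <;> ring
lemma sl2Br_leibniz (x y z : Fin 3 → ℝ) :
    sl2Br x (sl2Br y z) = sl2Br (sl2Br x y) z + sl2Br y (sl2Br x z) := by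
  funext i; fin_cases i <;> simp [sl2Br] <;> ring
lemma sl2Br_smul (t : ℝ) (x y : Fin 3 → ℝ) : sl2Br x (t • y) = t • sl2Br x y := by
  funext i; fin_cases i <;> simp [sl2Br] <;> ring

lemma so3Br_add_left (x y z : Fin 3 → ℝ) :
    so3Br (x + y) z = so3Br x z + so3Br y z := by
  funext i; fin_cases i <;> simp [so3Br] <;> ring
lemma so3Br_add_right (x y z : Fin 3 → ℝ) :
    so3Br x (y + z) = so3Br x y + so3Br x z := by
  funext i; fin_cases i <;> simp [so3Br] <;> ring
lemma so3Br_self (x : Fin 3 → ℝ) : so3Br x x = 0 := by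
  funext i; fin_cases i <;> simp [so3Br] <;> ring
lemma so3Br_leibniz (x y z : Fin 3 → ℝ) :
    so3Br x (so3Br y z) = so3Br (so3Br x y) z + so3Br y (so3Br x z) := by
  funext i; fin_cases i <;> simp [so3Br] <;> ring
lemma so3Br_smul (t : ℝ) (x y : Fin 3 → ℝ) : so3Br x (t • y) = t • so3Br x y := by
  funext i; fin_cases i <;> simp [so3Br] <;> ring

lemma ch1Br_add_left (x y z : Fin 3 → ℂ) :
    ch1Br (x + y) z = ch1Br x z + ch1Br y z := by
  funext i; fin_cases i <;> simp [ch1Br] <;> ring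
lemma ch1Br_add_right (x y z : Fin 3 → ℂ) :
    ch1Br x (y + z) = ch1Br x y + ch1Br x z := by
  funext i; fin_cases i <;> simp [ch1Br] <;> ring
lemma ch1Br_self (x : Fin 3 → ℂ) : ch1Br x x = 0 := by
  funext i; fin_cases i <;> simp [ch1Br] <;> ring
lemma ch1Br_leibniz (x y z : Fin 3 → ℂ) :
    ch1Br x (ch1Br y z) = ch1Br (ch1Br x y) z + ch1Br y (ch1Br x z) := by
  funext i; fin_cases i <;> simp [ch1Br] <;> ring
lemma ch1Br_smul (t : ℝ) (x y : Fin 3 → ℂ) : ch1Br x (t • y) = t • ch1Br x y := by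
  funext i; fin_cases i <;> simp [ch1Br] <;> ring

end BrLemmas

/-- A concrete copy of `sl(2,ℝ)`. -/
def SL2 : Type := Fin 3 → ℝ

namespace SL2
instance : AddCommGroup SL2 := inferInstanceAs (AddCommGroup (Fin 3 → ℝ))
instance : Module ℝ SL2 := inferInstanceAs (Module ℝ (Fin 3 → ℝ))
instance : LieRing SL2 where
  bracket := sl2Br
  add_lie := sl2Br_add_left
  lie_add := sl2Br_add_right
  lie_self := sl2Br_self
  leibniz_lie := sl2Br_leibniz
instance : LieAlgebra ℝ SL2 where
  lie_smul := sl2Br_smul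
def E1 : SL2 := ![1, 0, 0]
def E2 : SL2 := ![0, 1, 0]
def E3 : SL2 := ![0, 0, 1]
end SL2

/-- A concrete copy of `so(3)`. -/
def SO3 : Type := Fin 3 → ℝ

namespace SO3
instance : AddCommGroup SO3 := inferInstanceAs (AddCommGroup (Fin 3 → ℝ))
instance : Module ℝ SO3 := inferInstanceAs (Module ℝ (Fin 3 → ℝ))
instance : LieRing SO3 where
  bracket := so3Br
  add_lie := so3Br_add_left
  lie_add := so3Br_add_right
  lie_self := so3Br_self
  leibniz_lie := so3Br_leibniz
instance : LieAlgebra ℝ SO3 where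
  lie_smul := so3Br_smul
def E1 : SO3 := ![1, 0, 0]
def E2 : SO3 := ![0, 1, 0]
def E3 : SO3 := ![0, 0, 1]
end SO3

/-- The real Lie algebra underlying the complexification `h1 ⊗ ℂ` of the 3-dimensional
Heisenberg Lie algebra. -/
def CH1 : Type := Fin 3 → ℂ

namespace CH1
instance : AddCommGroup CH1 := inferInstanceAs (AddCommGroup (Fin 3 → ℂ))
instance : Module ℝ CH1 := inferInstanceAs (Module ℝ (Fin 3 → ℂ))
instance : LieRing CH1 where
  bracket := ch1Br
  add_lie := ch1Br_add_left
  lie_add := ch1Br_add_right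
  lie_self := ch1Br_self
  leibniz_lie := ch1Br_leibniz
instance : LieAlgebra ℝ CH1 where
  lie_smul := ch1Br_smul
end CH1

end Simple3

noncomputable section NoSympl
namespace NoSympl

variable (a b c d : ℝ)

/-- Basis of the cotangent algebra of `Solv3 (endOf a b c d)`. -/
def F1 : CotangentAlg (Solv3 (endOf a b c d)) := Sd.mk (Solv3.E1 _) 0
def F2 : CotangentAlg (Solv3 (endOf a b c d)) := Sd.mk (Solv3.E2 _) 0
def F3 : CotangentAlg (Solv3 (endOf a b c d)) := Sd.mk (Solv3.E3 _) 0
def F4 : CotangentAlg (Solv3 (endOf a b c d)) := Sd.mk 0 (Solv3.D1 _)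
def F5 : CotangentAlg (Solv3 (endOf a b c d)) := Sd.mk 0 (Solv3.D2 _)
def F6 : CotangentAlg (Solv3 (endOf a b c d)) := Sd.mk 0 (Solv3.D3 _)

@[simp] lemma endOf_apply (v : Fin 2 → ℝ) :
    endOf a b c d v = ![a * v 0 + b * v 1, c * v 0 + d * v 1] := rfl

@[simp] lemma D1_mk (s : ℝ) (w : Fin 2 → ℝ) :
    Solv3.D1 (endOf a b c d) (Sd.mk s w) = s := rfl
@[simp] lemma D2_mk (s : ℝ) (w : Fin 2 → ℝ) :
    Solv3.D2 (endOf a b c d) (Sd.mk s w) = w 0 := rfl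
@[simp] lemma D3_mk (s : ℝ) (w : Fin 2 → ℝ) :
    Solv3.D3 (endOf a b c d) (Sd.mk s w) = w 1 := rfl

@[simp] lemma rep2_apply (A : Module.End ℝ (Fin 2 → ℝ)) (t : ℝ) (w : Fin 2 → ℝ) :
    rep2 A t w = t • A w := rfl

lemma solv_lie (t s : ℝ) (v w : Fin 2 → ℝ) :
    ⁅(Sd.mk t v : Solv3 (endOf a b c d)), (Sd.mk s w : Solv3 (endOf a b c d))⁆
      = (Sd.mk 0 (t • endOf a b c d w - s • endOf a b c d v) : Solv3 (endOf a b c d)) := by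
  rw [Sd.lie_mk]
  congr 1
  simp [Ring.lie_def, mul_comm]

lemma coad_D1 (x : Solv3 (endOf a b c d)) :
    coadRep (Solv3 (endOf a b c d)) x (Solv3.D1 _) = 0 := by
  obtain ⟨t, v, rfl⟩ := Sd.mk_surj x
  apply LinearMap.ext; intro p
  obtain ⟨s, w, rfl⟩ := Sd.mk_surj p
  simp [solv_lie, LieAlgebra.ad_apply, Ring.lie_def, mul_comm]

lemma coad_D2 (t : ℝ) (v : Fin 2 → ℝ) :
    coadRep (Solv3 (endOf a b c d)) (Sd.mk t v) (Solv3.D2 _)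
      = (a * v 0 + b * v 1) • Solv3.D1 (endOf a b c d)
        + (-(t * a)) • Solv3.D2 (endOf a b c d)
        + (-(t * b)) • Solv3.D3 (endOf a b c d) := by
  apply LinearMap.ext; intro p
  obtain ⟨s, w, rfl⟩ := Sd.mk_surj p
  simp [solv_lie, LieAlgebra.ad_apply, Ring.lie_def, mul_comm]
  ring

lemma coad_D3 (t : ℝ) (v : Fin 2 → ℝ) :
    coadRep (Solv3 (endOf a b c d)) (Sd.mk t v) (Solv3.D3 _)
      = (c * v 0 + d * v 1) • Solv3.D1 (endOf a b c d)
        + (-(t * c)) • Solv3.D2 (endOf a b c d)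
        + (-(t * d)) • Solv3.D3 (endOf a b c d) := by
  apply LinearMap.ext; intro p
  obtain ⟨s, w, rfl⟩ := Sd.mk_surj p
  simp [solv_lie, LieAlgebra.ad_apply, Ring.lie_def, mul_comm]
  ring


lemma B12 : ⁅F1 a b c d, F2 a b c d⁆ = a • F2 a b c d + c • F3 a b c d := by
  simp [F1, F2, F3, Solv3.E1, Solv3.E2, Solv3.E3, Sd.ext_iff, Ring.lie_def]
lemma B13 : ⁅F1 a b c d, F3 a b c d⁆ = b • F2 a b c d + d • F3 a b c d := by
  simp [F1, F2, F3, Solv3.E1, Solv3.E2, Solv3.E3, Sd.ext_iff, Ring.lie_def]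
lemma B15 : ⁅F1 a b c d, F5 a b c d⁆ = -a • F5 a b c d + -b • F6 a b c d := by
  simp [F1, F5, F6, Solv3.E1, Sd.ext_iff, Ring.lie_def, coad_D2]
  module
lemma B16 : ⁅F1 a b c d, F6 a b c d⁆ = -c • F5 a b c d + -d • F6 a b c d := by
  simp [F1, F5, F6, Solv3.E1, Sd.ext_iff, Ring.lie_def, coad_D3]
  module
lemma B25 : ⁅F2 a b c d, F5 a b c d⁆ = a • F4 a b c d := by
  simp [F2, F4, F5, Solv3.E2, Sd.ext_iff, Ring.lie_def, coad_D2]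
lemma B26 : ⁅F2 a b c d, F6 a b c d⁆ = c • F4 a b c d := by
  simp [F2, F4, F6, Solv3.E2, Sd.ext_iff, Ring.lie_def, coad_D3]
lemma B35 : ⁅F3 a b c d, F5 a b c d⁆ = b • F4 a b c d := by
  simp [F3, F4, F5, Solv3.E3, Sd.ext_iff, Ring.lie_def, coad_D2]
lemma B36 : ⁅F3 a b c d, F6 a b c d⁆ = d • F4 a b c d := by
  simp [F3, F4, F6, Solv3.E3, Sd.ext_iff, Ring.lie_def, coad_D3]
lemma B14 : ⁅F1 a b c d, F4 a b c d⁆ = 0 := by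
  simp [F1, F4, Solv3.E1, Sd.ext_iff, Ring.lie_def, coad_D1]
  exact ⟨⟨rfl, rfl⟩, rfl⟩
lemma B24 : ⁅F2 a b c d, F4 a b c d⁆ = 0 := by
  simp [F2, F4, Solv3.E2, Sd.ext_iff, Ring.lie_def, coad_D1]
  exact ⟨⟨rfl, rfl⟩, rfl⟩
lemma B34 : ⁅F3 a b c d, F4 a b c d⁆ = 0 := by
  simp [F3, F4, Solv3.E3, Sd.ext_iff, Ring.lie_def, coad_D1]
  exact ⟨⟨rfl, rfl⟩, rfl⟩
lemma B23 : ⁅F2 a b c d, F3 a b c d⁆ = 0 := by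
  simp [F2, F3, Solv3.E2, Solv3.E3, Sd.ext_iff, Ring.lie_def]
  exact ⟨⟨rfl, rfl⟩, rfl⟩
lemma B56 : ⁅F5 a b c d, F6 a b c d⁆ = 0 := by
  simp [F5, F6, Sd.ext_iff, Ring.lie_def]
  exact ⟨⟨rfl, rfl⟩, rfl⟩
lemma B46 : ⁅F4 a b c d, F6 a b c d⁆ = 0 := by
  simp [F4, F6, Sd.ext_iff, Ring.lie_def]
  exact ⟨⟨rfl, rfl⟩, rfl⟩
lemma B45 : ⁅F4 a b c d, F5 a b c d⁆ = 0 := by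
  simp [F4, F5, Sd.ext_iff, Ring.lie_def]
  exact ⟨⟨rfl, rfl⟩, rfl⟩

end NoSympl
end NoSympl
namespace NoSympl

section Helpers
variable {G : Type*} [LieRing G] [LieAlgebra ℝ G] {ω : G → G → ℝ}

lemma addl (hω : IsSymplForm ω) (x y z : G) : ω (x + y) z = ω x z + ω y z :=
  (hω.2.1 z).map_add x y
lemma smull (hω : IsSymplForm ω) (t : ℝ) (x z : G) : ω (t • x) z = t * ω x z := by
  simpa using (hω.2.1 z).map_smul t x
lemma negl (hω : IsSymplForm ω) (x z : G) : ω (-x) z = -(ω x z) :=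
  (hω.2.1 z).map_neg x
lemma addr (hω : IsSymplForm ω) (x y z : G) : ω x (y + z) = ω x y + ω x z :=
  (hω.1 x).map_add y z
lemma smulr (hω : IsSymplForm ω) (t : ℝ) (x z : G) : ω x (t • z) = t * ω x z := by
  simpa using (hω.1 x).map_smul t z
lemma zerol (hω : IsSymplForm ω) (z : G) : ω 0 z = 0 :=
  (hω.2.1 z).map_zero
lemma zeror (hω : IsSymplForm ω) (x : G) : ω x 0 = 0 :=
  (hω.1 x).map_zero
lemma skew (hω : IsSymplForm ω) (x y : G) : ω x y = -(ω y x) := by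
  have h := hω.2.2.1 (x + y)
  rw [addl hω, addr hω, addr hω, hω.2.2.1 x, hω.2.2.1 y] at h
  linarith

end Helpers

variable (a b c d : ℝ)

lemma solv_decomp (s : ℝ) (w : Fin 2 → ℝ) :
    (Sd.mk s w : Solv3 (endOf a b c d))
      = s • Solv3.E1 (endOf a b c d) + w 0 • Solv3.E2 (endOf a b c d)
        + w 1 • Solv3.E3 (endOf a b c d) := by
  simp [Solv3.E1, Solv3.E2, Solv3.E3, Sd.ext_iff]
  funext i; fin_cases i <;> simp

lemma dual_decomp (φ : Module.Dual ℝ (Solv3 (endOf a b c d))) :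
    φ = φ (Solv3.E1 (endOf a b c d)) • Solv3.D1 (endOf a b c d)
      + φ (Solv3.E2 (endOf a b c d)) • Solv3.D2 (endOf a b c d)
      + φ (Solv3.E3 (endOf a b c d)) • Solv3.D3 (endOf a b c d) := by
  apply LinearMap.ext; intro p
  obtain ⟨s, w, rfl⟩ := Sd.mk_surj p
  conv_lhs => rw [solv_decomp a b c d s w]
  simp [map_add, map_smul]
  ring

lemma elem_decomp (p : CotangentAlg (Solv3 (endOf a b c d))) :
    ∃ c1 c2 c3 c4 c5 c6 : ℝ,
      p = c1 • F1 a b c d + c2 • F2 a b c d + c3 • F3 a b c d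
        + c4 • F4 a b c d + c5 • F5 a b c d + c6 • F6 a b c d := by
  obtain ⟨x, φ, rfl⟩ := Sd.mk_surj p
  obtain ⟨s, w, rfl⟩ := Sd.mk_surj x
  refine ⟨s, w 0, w 1, φ (Solv3.E1 _), φ (Solv3.E2 _), φ (Solv3.E3 _), ?_⟩
  simp only [F1, F2, F3, F4, F5, F6, Sd.smul_mk, Sd.mk_add_mk, Sd.mk_inj, smul_zero]
  constructor
  · simpa using solv_decomp a b c d s w
  · simpa using dual_decomp a b c d φ

lemma F4_ne_zero : F4 a b c d ≠ 0 := by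
  intro h
  have h2 : Solv3.D1 (endOf a b c d) = 0 := congrArg Sd.pr2 h
  have h3 : (1 : ℝ) = 0 := by
    have := LinearMap.congr_fun h2 (Sd.mk 1 0)
    simpa using this
  exact one_ne_zero h3

end NoSympl
namespace NoSympl
variable (a b c d : ℝ)

lemma B41 : ⁅F4 a b c d, F1 a b c d⁆ = 0 := by
  rw [← lie_skew, B14, neg_zero]
lemma B32 : ⁅F3 a b c d, F2 a b c d⁆ = 0 := by
  rw [← lie_skew, B23, neg_zero]
lemma B54 : ⁅F5 a b c d, F4 a b c d⁆ = 0 := by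
  rw [← lie_skew, B45, neg_zero]
lemma B64 : ⁅F6 a b c d, F4 a b c d⁆ = 0 := by
  rw [← lie_skew, B46, neg_zero]
lemma B53 : ⁅F5 a b c d, F3 a b c d⁆ = -b • F4 a b c d := by
  rw [← lie_skew, B35]; module
lemma B62 : ⁅F6 a b c d, F2 a b c d⁆ = -c • F4 a b c d := by
  rw [← lie_skew, B26]; module
lemma B65 : ⁅F6 a b c d, F5 a b c d⁆ = 0 := by
  rw [← lie_skew, B56, neg_zero]
lemma B51 : ⁅F5 a b c d, F1 a b c d⁆ = a • F5 a b c d + b • F6 a b c d := by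
  rw [← lie_skew, B15]; module
lemma B61 : ⁅F6 a b c d, F1 a b c d⁆ = c • F5 a b c d + d • F6 a b c d := by
  rw [← lie_skew, B16]; module

lemma no_sympl_aux (ω : CotangentAlg (Solv3 (endOf a b c d)) → CotangentAlg (Solv3 (endOf a b c d)) → ℝ)
    (hω : IsSymplForm ω)
    (h1 : ω (F4 a b c d) (F1 a b c d) = 0)
    (h2 : ω (F4 a b c d) (F2 a b c d) = 0)
    (h3 : ω (F4 a b c d) (F3 a b c d) = 0)
    (h5 : ω (F4 a b c d) (F5 a b c d) = 0)
    (h6 : ω (F4 a b c d) (F6 a b c d) = 0) : False := by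
  have hall : ∀ p, ω (F4 a b c d) p = 0 := by
    intro p
    obtain ⟨c1, c2, c3, c4, c5, c6, rfl⟩ := elem_decomp a b c d p
    have h4 : ω (F4 a b c d) (F4 a b c d) = 0 := hω.2.2.1 _
    simp [addr hω, smulr hω, h1, h2, h3, h4, h5, h6]
  exact F4_ne_zero a b c d (hω.2.2.2.1 _ hall)

end NoSympl
namespace NoSympl

lemma no_sympl_R3l (lam : ℝ)
    (ω : CotangentAlg (Solv3 (endOf 1 0 0 lam)) → CotangentAlg (Solv3 (endOf 1 0 0 lam)) → ℝ)
    (hω : IsSymplForm ω) : False := by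
  have hcl := hω.2.2.2.2
  have h124 := hcl (F1 1 0 0 lam) (F2 1 0 0 lam) (F4 1 0 0 lam)
  rw [B12, B24, B41] at h124
  simp [addl hω, smull hω, zerol hω, negl hω] at h124
  have h154 := hcl (F1 1 0 0 lam) (F5 1 0 0 lam) (F4 1 0 0 lam)
  rw [B15, B54, B41] at h154
  simp [addl hω, smull hω, zerol hω, negl hω] at h154
  have h253 := hcl (F2 1 0 0 lam) (F5 1 0 0 lam) (F3 1 0 0 lam)
  rw [B25, B53, B32] at h253
  simp [addl hω, smull hω, zerol hω, negl hω] at h253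
  have h256 := hcl (F2 1 0 0 lam) (F5 1 0 0 lam) (F6 1 0 0 lam)
  rw [B25, B56, B62] at h256
  simp [addl hω, smull hω, zerol hω, negl hω] at h256
  have h251 := hcl (F2 1 0 0 lam) (F5 1 0 0 lam) (F1 1 0 0 lam)
  rw [B25, B51, B12] at h251
  simp [addl hω, smull hω, zerol hω, negl hω] at h251
  have s25 := skew hω (F2 1 0 0 lam) (F5 1 0 0 lam)
  have s24 := skew hω (F2 1 0 0 lam) (F4 1 0 0 lam)
  have s54 := skew hω (F5 1 0 0 lam) (F4 1 0 0 lam)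
  refine no_sympl_aux 1 0 0 lam ω hω (by linarith) (by linarith) (by linarith)
    (by linarith) (by linarith)

end NoSympl
namespace NoSympl

lemma no_sympl_R3e (eta : ℝ)
    (ω : CotangentAlg (Solv3 (endOf eta 1 (-1) eta)) →
      CotangentAlg (Solv3 (endOf eta 1 (-1) eta)) → ℝ)
    (hω : IsSymplForm ω) : False := by
  have hcl := hω.2.2.2.2
  have hd : (1 : ℝ) + eta ^ 2 ≠ 0 := by positivity
  have h124 := hcl (F1 eta 1 (-1) eta) (F2 eta 1 (-1) eta) (F4 eta 1 (-1) eta)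
  rw [B12, B24, B41] at h124
  simp [addl hω, smull hω, zerol hω, negl hω] at h124
  have h134 := hcl (F1 eta 1 (-1) eta) (F3 eta 1 (-1) eta) (F4 eta 1 (-1) eta)
  rw [B13, B34, B41] at h134
  simp [addl hω, smull hω, zerol hω, negl hω] at h134
  have h154 := hcl (F1 eta 1 (-1) eta) (F5 eta 1 (-1) eta) (F4 eta 1 (-1) eta)
  rw [B15, B54, B41] at h154
  simp [addl hω, smull hω, zerol hω, negl hω] at h154
  have h164 := hcl (F1 eta 1 (-1) eta) (F6 eta 1 (-1) eta) (F4 eta 1 (-1) eta)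
  rw [B16, B64, B41] at h164
  simp [addl hω, smull hω, zerol hω, negl hω] at h164
  have h261 := hcl (F2 eta 1 (-1) eta) (F6 eta 1 (-1) eta) (F1 eta 1 (-1) eta)
  rw [B26, B61, B12] at h261
  simp [addl hω, smull hω, zerol hω, negl hω] at h261
  have h351 := hcl (F3 eta 1 (-1) eta) (F5 eta 1 (-1) eta) (F1 eta 1 (-1) eta)
  rw [B35, B51, B13] at h351
  simp [addl hω, smull hω, zerol hω, negl hω] at h351
  have s26 := skew hω (F2 eta 1 (-1) eta) (F6 eta 1 (-1) eta)
  have s35 := skew hω (F3 eta 1 (-1) eta) (F5 eta 1 (-1) eta)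
  have s25 := skew hω (F2 eta 1 (-1) eta) (F5 eta 1 (-1) eta)
  have s36 := skew hω (F3 eta 1 (-1) eta) (F6 eta 1 (-1) eta)
  -- row-4 entries
  have w24 : ω (F2 eta 1 (-1) eta) (F4 eta 1 (-1) eta) = 0 := by
    have key : (1 + eta ^ 2) * ω (F2 eta 1 (-1) eta) (F4 eta 1 (-1) eta) = 0 := by
      linear_combination eta * h124 + h134
    exact by
      rcases mul_eq_zero.mp key with h | h
      · exact absurd h hd
      · exact h
  have w34 : ω (F3 eta 1 (-1) eta) (F4 eta 1 (-1) eta) = 0 := by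
    have key : (1 + eta ^ 2) * ω (F3 eta 1 (-1) eta) (F4 eta 1 (-1) eta) = 0 := by
      linear_combination eta * h134 - h124
    exact (mul_eq_zero.mp key).resolve_left hd
  have w64 : ω (F6 eta 1 (-1) eta) (F4 eta 1 (-1) eta) = 0 := by
    have key : (1 + eta ^ 2) * ω (F6 eta 1 (-1) eta) (F4 eta 1 (-1) eta) = 0 := by
      linear_combination -(h154 + eta * h164)
    exact (mul_eq_zero.mp key).resolve_left hd
  have w54 : ω (F5 eta 1 (-1) eta) (F4 eta 1 (-1) eta) = 0 := by
    linear_combination h164 + eta * w64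
  have w41 : ω (F4 eta 1 (-1) eta) (F1 eta 1 (-1) eta) = 0 := by
    linear_combination (h351 - h261 - eta * s35 + eta * s26 - s25 - s36) / 2
  refine no_sympl_aux eta 1 (-1) eta ω hω w41 (by linarith [skew hω (F2 eta 1 (-1) eta) (F4 eta 1 (-1) eta)])
    (by linarith [skew hω (F3 eta 1 (-1) eta) (F4 eta 1 (-1) eta)])
    (by linarith [skew hω (F5 eta 1 (-1) eta) (F4 eta 1 (-1) eta)])
    (by linarith [skew hω (F6 eta 1 (-1) eta) (F4 eta 1 (-1) eta)])

end NoSympl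
end
/-- The cotangent Lie algebras `T*r_{3,λ}` (`|λ| ≤ 1`) and `T*r'_{3,η}`
(`η ≥ 0`) carry no symplectic structure. -/
theorem cotangent_r3l_r3e_no_symplectic :
    (∀ lam : ℝ, |lam| ≤ 1 →
      ¬∃ ω : CotangentAlg (R3l lam) → CotangentAlg (R3l lam) → ℝ, IsSymplForm ω) ∧
    ∀ eta : ℝ, 0 ≤ eta →
      ¬∃ ω : CotangentAlg (R3e' eta) → CotangentAlg (R3e' eta) → ℝ, IsSymplForm ω := by
  constructor
  · rintro lam - ⟨ω, hω⟩
    exact NoSympl.no_sympl_R3l lam ω hω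
  · rintro eta - ⟨ω, hω⟩
    exact NoSympl.no_sympl_R3e eta ω hω
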